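/- arXiv:2412.04145 — 2 statements merged into one kernel-verified Lean document; each statement's English description precedes it below -/
import Mathlib

section
/- Let G be a graph of maximum degree α, and let S ⊆ V(G) be such that G[S] is connected and S contains exactly k vertices whose degree in G is at least 3. Then the number of vertices of S having a neighbor outside of S is at most (2α)^{k+1}. -/
open Finset

private lemma conn_card_le' {W : Type*} [Fintype W] (H : SimpleGraph W) [DecidableRel H.Adj]
    (hc : H.Connected) : Fintype.card W ≤ H.edgeFinset.card + 1 := by
  classical
  obtain ⟨r⟩ := hc.nonempty
  have key : ∀ v : W, v ≠ r → ∃ u, H.Adj v u ∧ H.dist u r < H.dist v r := by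
    intro v hv
    obtain ⟨p, hp⟩ := hc.exists_walk_length_eq_dist v r
    cases p with
    | nil => exact absurd rfl hv
    | cons h q =>
        refine ⟨_, h, ?_⟩
        have h1 := SimpleGraph.dist_le q
        simp [SimpleGraph.Walk.length_cons] at hp
        omega
  choose u hadj hdist using key
  have hcard : (Finset.univ.erase r).card ≤ H.edgeFinset.card := by
    refine Finset.card_le_card_of_injOn
      (fun v => if h : v = r then s(r, r) else s(v, u v h)) ?_ ?_
    · intro a ha
      have ha' : a ≠ r := (Finset.mem_erase.1 ha).1
      simp only []
      rw [dif_neg ha']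
      rw [Finset.mem_coe, SimpleGraph.mem_edgeFinset, SimpleGraph.mem_edgeSet]
      exact hadj a ha'
    · intro a ha b hb hab
      have ha' : a ≠ r := by simpa using ha
      have hb' : b ≠ r := by simpa using hb
      simp only [] at hab
      rw [dif_neg ha', dif_neg hb'] at hab
      rw [Sym2.eq_iff] at hab
      rcases hab with ⟨h1, _⟩ | ⟨h1, h2⟩
      · exact h1
      · exfalso
        have d1 := hdist a ha'
        have d2 := hdist b hb'
        rw [h2] at d1
        rw [← h1] at d2
        omega
  have := Finset.card_erase_of_mem (Finset.mem_univ r)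
  have hpos : 0 < Fintype.card W := Fintype.card_pos_iff.2 ⟨r⟩
  simp only [Finset.card_univ] at this
  omega

private lemma ncard_eq_degree' {V : Type*} [Fintype V] (G : SimpleGraph V) [DecidableRel G.Adj]
    (v : V) : (G.neighborSet v).ncard = G.degree v := by
  rw [Set.ncard_eq_toFinset_card']
  simp [SimpleGraph.neighborFinset_def]
  rw [SimpleGraph.degree]
  congr 1
  ext x
  simp [SimpleGraph.mem_neighborFinset]

private lemma arith_bound' (α k : ℕ) (hα : 1 ≤ α) : α * k + 2 ≤ (2 * α) ^ (k + 1) := by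
  have h1 : k + 2 ≤ 2 ^ (k + 1) := Nat.lt_two_pow_self
  calc α * k + 2 ≤ (k + 2) * α := by nlinarith
    _ ≤ 2 ^ (k + 1) * α := Nat.mul_le_mul_right _ h1
    _ ≤ 2 ^ (k + 1) * α ^ (k + 1) := Nat.mul_le_mul_left _ (Nat.le_self_pow (by omega) α)
    _ = (2 * α) ^ (k + 1) := (mul_pow 2 α (k + 1)).symm

/-- Let `G` be a (finite) graph of maximum degree `α`, and let `S ⊆ V(G)`
be such that `G[S]` is connected and `S` contains exactly `k` vertices whose degree in `G`
is at least `3`.  Then the number of vertices of `S` having a neighbor outside of `S` is at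
most `(2α)^{k+1}`. -/
theorem boundary_vertices_le {V : Type*} [Fintype V] (G : SimpleGraph V) (α k : ℕ)
    (hdeg : ∀ v : V, (G.neighborSet v).ncard ≤ α)
    (S : Set V) (hconn : (G.induce S).Connected)
    (hk : {v ∈ S | 3 ≤ (G.neighborSet v).ncard}.ncard = k) :
    {x ∈ S | ∃ y ∉ S, G.Adj x y}.ncard ≤ (2 * α) ^ (k + 1) := by
  classical
  -- case α = 0
  rcases Nat.eq_zero_or_pos α with hα | hα
  · have hempty : {x ∈ S | ∃ y ∉ S, G.Adj x y} = ∅ := by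
      ext x
      simp only [Set.mem_setOf_eq, Set.mem_empty_iff_false, iff_false, not_and]
      rintro hx ⟨y, hy, hadj⟩
      have h1 := hdeg x
      have h2 : y ∈ G.neighborSet x := hadj
      have h3 : 0 < (G.neighborSet x).ncard :=
        (Set.ncard_pos (Set.toFinite _)).2 ⟨y, h2⟩
      omega
    rw [hempty]
    simp
  -- main case
  have hdegG : ∀ v : V, G.degree v ≤ α := fun v => (ncard_eq_degree' G v) ▸ hdeg v
  set G' := G.induce S with hG'
  haveI : DecidableRel G'.Adj := Classical.decRel _
  -- predicates on the subtype
  set high : S → Prop := fun v => 3 ≤ G.degree v.val with hhigh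
  set bd : S → Prop := fun v => ∃ y ∉ S, G.Adj v.val y with hbd
  set H : Finset S := Finset.univ.filter (fun v => high v) with hH
  set B : Finset S := Finset.univ.filter (fun v => ¬ high v ∧ bd v) with hB
  set Ball : Finset S := Finset.univ.filter (fun v => bd v) with hBall
  have n := Fintype.card S
  -- degree facts about G'
  have hle : ∀ v : S, G'.degree v ≤ G.degree v.val := by
    intro v
    refine Finset.card_le_card_of_injOn (fun u => u.val) ?_ ?_
    · intro a ha
      rw [Finset.mem_coe, SimpleGraph.mem_neighborFinset] at ha
      rw [Finset.mem_coe, SimpleGraph.mem_neighborFinset]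
      exact ha
    · exact fun a _ b _ hab => Subtype.ext hab
  have hbd_le : ∀ v : S, bd v → G'.degree v + 1 ≤ G.degree v.val := by
    intro v ⟨y, hy, hadj⟩
    have hyne : ∀ u : S, (u : V) ≠ y := by
      intro u h; exact hy (h ▸ u.2)
    have : G'.degree v ≤ ((G.neighborFinset v.val).erase y).card := by
      refine Finset.card_le_card_of_injOn (fun u => u.val) ?_ ?_
      · intro a ha
        rw [Finset.mem_coe, SimpleGraph.mem_neighborFinset] at ha
        rw [Finset.mem_coe, Finset.mem_erase, SimpleGraph.mem_neighborFinset]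
        exact ⟨hyne a, ha⟩
      · exact fun a _ b _ hab => Subtype.ext hab
    have h2 : y ∈ G.neighborFinset v.val := by
      rw [SimpleGraph.mem_neighborFinset]; exact hadj
    have h3 := Finset.card_erase_of_mem h2
    have h4 : 0 < (G.neighborFinset v.val).card := Finset.card_pos.2 ⟨y, h2⟩
    have hd1 : G'.degree v = (G'.neighborFinset v).card := rfl
    have hd2 : G.degree v.val = (G.neighborFinset v.val).card := rfl
    omega
  -- pointwise bound
  set F : S → ℕ := fun v => if high v then α else if bd v then 1 else 2 with hF
  have hptle : ∀ v : S, G'.degree v ≤ F v := by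
    intro v
    rw [hF]
    dsimp only
    split_ifs with h1 h2
    · exact (hle v).trans (hdegG v.val)
    · have := hbd_le v h2
      have h3 : G.degree v.val ≤ 2 := by
        rw [hhigh] at h1; omega
      omega
    · have h3 : G.degree v.val ≤ 2 := by
        rw [hhigh] at h1; omega
      exact (hle v).trans h3
  -- pointwise identity
  have hptid : ∀ v : S, F v + (if high v then 2 else 0) + (if ¬ high v ∧ bd v then 1 else 0)
      = 2 + (if high v then α else 0) := by
    intro v
    rw [hF]
    by_cases h1 : high v <;> by_cases h2 : bd v <;> simp [h1, h2] <;> omega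
  -- sums
  have hsumid : (∑ v : S, F v) + 2 * H.card + B.card = 2 * Fintype.card S + α * H.card := by
    have e1 : (∑ v : S, (if high v then (2:ℕ) else 0)) = 2 * H.card := by
      rw [hH, ← Finset.sum_filter, Finset.sum_const, smul_eq_mul, mul_comm]
    have e2 : (∑ v : S, (if ¬ high v ∧ bd v then (1:ℕ) else 0)) = B.card := by
      rw [hB, ← Finset.sum_filter, Finset.sum_const, smul_eq_mul, mul_one]
    have e3 : (∑ v : S, (if high v then α else 0)) = α * H.card := by
      rw [hH, ← Finset.sum_filter, Finset.sum_const, smul_eq_mul, mul_comm]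
    have this : (∑ v : S, (F v + (if high v then (2:ℕ) else 0) + (if ¬ high v ∧ bd v then (1:ℕ) else 0)))
        = ∑ v : S, ((2:ℕ) + (if high v then α else 0)) :=
      Finset.sum_congr rfl (fun v _ => hptid v)
    rw [Finset.sum_add_distrib, Finset.sum_add_distrib, Finset.sum_add_distrib,
      Finset.sum_const, e1, e2, e3] at this
    simp only [Finset.card_univ, smul_eq_mul] at this
    omega
  have hsumle : (∑ v : S, G'.degree v) ≤ ∑ v : S, F v :=
    Finset.sum_le_sum (fun v _ => hptle v)
  -- handshake + connectivity
  have hhs : (∑ v : S, G'.degree v) = 2 * G'.edgeFinset.card :=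
    SimpleGraph.sum_degrees_eq_twice_card_edges G'
  have hconn' : Fintype.card S ≤ G'.edgeFinset.card + 1 := conn_card_le' G' hconn
  -- card facts
  have hHk : H.card = k := by
    rw [← hk]
    have himg : {v ∈ S | 3 ≤ (G.neighborSet v).ncard}
        = (fun v : S => v.val) '' {v : S | high v} := by
      ext x
      constructor
      · rintro ⟨hx, hp⟩
        exact ⟨⟨x, hx⟩, by rwa [hhigh, Set.mem_setOf_eq, ← ncard_eq_degree'], rfl⟩
      · rintro ⟨⟨v, hv⟩, hp, rfl⟩
        rw [Set.mem_setOf_eq, hhigh] at hp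
        exact ⟨hv, by rwa [ncard_eq_degree']⟩
    rw [himg, Set.ncard_image_of_injective _ Subtype.val_injective,
      Set.ncard_eq_toFinset_card', Set.toFinset_setOf]
  have hBallcard : {x ∈ S | ∃ y ∉ S, G.Adj x y}.ncard = Ball.card := by
    have himg : {x ∈ S | ∃ y ∉ S, G.Adj x y} = (fun v : S => v.val) '' {v : S | bd v} := by
      ext x
      constructor
      · rintro ⟨hx, hp⟩
        exact ⟨⟨x, hx⟩, hp, rfl⟩
      · rintro ⟨⟨v, hv⟩, hp, rfl⟩
        exact ⟨hv, hp⟩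
    rw [himg, Set.ncard_image_of_injective _ Subtype.val_injective,
      Set.ncard_eq_toFinset_card', Set.toFinset_setOf, hBall]
  have hBallsub : Ball.card ≤ H.card + B.card := by
    have : Ball ⊆ H ∪ B := by
      intro v hv
      rw [hBall, Finset.mem_filter] at hv
      rw [Finset.mem_union, hH, hB, Finset.mem_filter, Finset.mem_filter]
      by_cases h : high v
      · exact Or.inl ⟨Finset.mem_univ v, h⟩
      · exact Or.inr ⟨Finset.mem_univ v, h, hv.2⟩
    exact (Finset.card_le_card this).trans (Finset.card_union_le H B)
  -- final arithmetic
  rw [hBallcard]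
  have hmain : 2 * H.card + B.card ≤ α * H.card + 2 := by omega
  rw [hHk] at hmain hBallsub
  have key : Ball.card ≤ α * k + 2 := by omega
  exact key.trans (arith_bound' α k hα)
end

section
/- Let G be the graph obtained from the k×k grid by adding two universal vertices x, y, let A, B be the grid's bipartition classes, and Z₁ := A ∪ {x}. Then G[Z₁ \ {x}] = G[A] has no edges, so G/(Z₁ \ {x}) is isomorphic to G, and hence tw(G/(Z₁ \ {x})) ≥ k. In particular, removing a single vertex from a contraction set can increase the treewidth of the contracted graph from 2 to at least k. -/
/-- A rooted tree decomposition of a graph `G`.  The rooted tree on the index type `ι` is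
given by a parent function together with a root which every node reaches by iterating
`parent`.  The bags satisfy the usual covering, edge and (subtree-)connectivity axioms;
the connectivity axiom is phrased for rooted trees: if `v` lies in the bag of `t` but not
in the bag of its parent (and `t` is not the root), then every node whose bag contains `v`
is a descendant of `t`. -/
structure RootedTreeDecomp (V : Type*) (ι : Type*) (G : SimpleGraph V) where
  parent : ι → ι
  root : ι
  parent_root : parent root = root
  reaches_root : ∀ t : ι, ∃ n : ℕ, parent^[n] t = root
  bag : ι → Set V
  bag_cover : ∀ v : V, ∃ t : ι, v ∈ bag t
  bag_edge : ∀ ⦃u v : V⦄, G.Adj u v → ∃ t : ι, u ∈ bag t ∧ v ∈ bag t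
  bag_conn : ∀ (v : V) (t : ι), v ∈ bag t → t ≠ root → v ∉ bag (parent t) →
      ∀ s : ι, v ∈ bag s → ∃ n : ℕ, parent^[n] s = t

namespace RootedTreeDecomp

variable {V ι : Type*} {G : SimpleGraph V}

open Classical

/-- The adhesion `σ(t) = β(t) ∩ β(parent t)`, with `σ(root) = ∅`. -/
noncomputable def adhesion (D : RootedTreeDecomp V ι G) (t : ι) : Set V :=
  if t = D.root then ∅ else D.bag t ∩ D.bag (D.parent t)

/-- `s` is a child of `t` in the rooted tree. -/
def IsChild (D : RootedTreeDecomp V ι G) (s t : ι) : Prop :=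
  s ≠ D.root ∧ D.parent s = t

/-- The set `γ(t)`: the union of the bags over the subtree rooted at `t`. -/
def subtreeBags (D : RootedTreeDecomp V ι G) (t : ι) : Set V :=
  ⋃ s ∈ {s : ι | ∃ n : ℕ, D.parent^[n] s = t}, D.bag s

/-- The torso of a node `t`: the graph on the bag `β(t)` (as a graph with vertex set `V`,
with all edges inside `β(t)`) obtained from `G[β(t)]` by making the adhesion `σ(s)` of every
child `s` of `t` into a clique. -/
def torso (D : RootedTreeDecomp V ι G) (t : ι) : SimpleGraph V where
  Adj u v := u ≠ v ∧ u ∈ D.bag t ∧ v ∈ D.bag t ∧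
    (G.Adj u v ∨ ∃ s : ι, D.IsChild s t ∧ u ∈ D.adhesion s ∧ v ∈ D.adhesion s)
  symm := by
    constructor
    rintro u v ⟨hne, hu, hv, h⟩
    refine ⟨hne.symm, hv, hu, ?_⟩
    rcases h with h | ⟨s, hs, h1, h2⟩
    · exact Or.inl h.symm
    · exact Or.inr ⟨s, hs, h2, h1⟩
  loopless := ⟨fun u h => h.1 rfl⟩

end RootedTreeDecomp

/-- `G` has treewidth at most `w`: it admits a (rooted) tree decomposition all of whose
bags are finite of cardinality at most `w + 1`. -/
def TreewidthLE.{u_tw} {V : Type*} (G : SimpleGraph V) (w : ℕ) : Prop :=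
  ∃ (ι : Type u_tw) (D : RootedTreeDecomp V ι G),
    ∀ t : ι, (D.bag t).Finite ∧ (D.bag t).ncard ≤ w + 1

/-- `u` and `v` lie in the same connected component of `G[Z]`. -/
def ReachIn {V : Type*} (G : SimpleGraph V) (Z : Set V) (u v : V) : Prop :=
  ∃ (hu : u ∈ Z) (hv : v ∈ Z), (G.induce Z).Reachable ⟨u, hu⟩ ⟨v, hv⟩

/-- `G'` is obtained from `G` by contracting edges, with quotient map `π` : `π` is
surjective, each fibre induces a connected subgraph of `G`, and two distinct vertices of
`G'` are adjacent exactly when some edge of `G` joins the corresponding fibres. -/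
def IsContraction {V V' : Type*} (G : SimpleGraph V) (G' : SimpleGraph V') (π : V → V') :
    Prop :=
  Function.Surjective π ∧
  (∀ a : V', (G.induce (π ⁻¹' {a})).Connected) ∧
  (∀ a b : V', G'.Adj a b ↔ a ≠ b ∧ ∃ u v : V, G.Adj u v ∧ π u = a ∧ π v = b)

/-- `G'` is the graph `G/Z` obtained from `G` by contracting every connected component of
`G[Z]` to a single vertex, with quotient map `π`: additionally to being a contraction, `π`
identifies two vertices exactly when they coincide or lie in the same connected component
of `G[Z]`. -/
def IsComponentContraction {V V' : Type*} (G : SimpleGraph V) (Z : Set V)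
    (G' : SimpleGraph V') (π : V → V') : Prop :=
  Function.Surjective π ∧
  (∀ u v : V, π u = π v ↔ u = v ∨ ReachIn G Z u v) ∧
  (∀ a b : V', G'.Adj a b ↔ a ≠ b ∧ ∃ u v : V, G.Adj u v ∧ π u = a ∧ π v = b)

/-- Distance of natural numbers (`|a - b|`). -/
def natDist (a b : ℕ) : ℕ := max a b - min a b

/-- The `k × k` grid graph together with two universal apex vertices `x = Sum.inr 0` and
`y = Sum.inr 1`, each adjacent to all grid vertices and to each other. -/
def gridApex (k : ℕ) : SimpleGraph ((Fin k × Fin k) ⊕ Fin 2) where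
  Adj a b :=
    match a, b with
    | Sum.inl p, Sum.inl q => natDist p.1.val q.1.val + natDist p.2.val q.2.val = 1
    | Sum.inl _, Sum.inr _ => True
    | Sum.inr _, Sum.inl _ => True
    | Sum.inr i, Sum.inr j => i ≠ j
  symm := by
    constructor
    rintro (p | i) (q | j) h
    · simpa [natDist, Nat.max_comm, Nat.min_comm] using h
    · trivial
    · trivial
    · exact h.symm
  loopless := by
    constructor
    rintro (p | i) h
    · simp [natDist] at h
    · exact h rfl

/-- The bipartition class `A` of the grid: grid vertices `(i,j)` with `i + j` even. -/
def gridEven (k : ℕ) : Set ((Fin k × Fin k) ⊕ Fin 2) :=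
  {x | ∃ p : Fin k × Fin k, x = Sum.inl p ∧ (p.1.val + p.2.val) % 2 = 0}

/-- The bipartition class `B` of the grid: grid vertices `(i,j)` with `i + j` odd. -/
def gridOdd (k : ℕ) : Set ((Fin k × Fin k) ⊕ Fin 2) :=
  {x | ∃ p : Fin k × Fin k, x = Sum.inl p ∧ (p.1.val + p.2.val) % 2 = 1}

/-- `Z₁ = A ∪ {x}`. -/
def Zone (k : ℕ) : Set ((Fin k × Fin k) ⊕ Fin 2) := gridEven k ∪ {Sum.inr 0}

/-- `Z₂ = B ∪ {y}`. -/
def Ztwo (k : ℕ) : Set ((Fin k × Fin k) ⊕ Fin 2) := gridOdd k ∪ {Sum.inr 1}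


-- Auxiliary development ------------------------------------------------

namespace RootedTreeDecomp

attribute [local instance] Classical.propDecidable

variable {V : Type*} {ι : Type*} {G : SimpleGraph V} (D : RootedTreeDecomp V ι G)

def Desc (a b : ι) : Prop := ∃ n, D.parent^[n] a = b

lemma desc_refl (a : ι) : D.Desc a a := ⟨0, rfl⟩

lemma desc_trans {a b c : ι} (h1 : D.Desc a b) (h2 : D.Desc b c) : D.Desc a c := by
  obtain ⟨m, rfl⟩ := h1; obtain ⟨n, rfl⟩ := h2
  exact ⟨n + m, Function.iterate_add_apply _ n m a⟩

lemma iterate_root (n : ℕ) : D.parent^[n] D.root = D.root :=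
  Function.iterate_fixed D.parent_root n

lemma eq_root_of_periodic {t : ι} {n : ℕ} (hn : 1 ≤ n) (h : D.parent^[n] t = t) :
    t = D.root := by
  obtain ⟨m, hm⟩ := D.reaches_root t
  have key : ∀ c, D.parent^[n * c] t = t := by
    intro c
    induction c with
    | zero => simp
    | succ c ih =>
        have h2 : n * (c + 1) = n + n * c := by ring
        rw [h2, Function.iterate_add_apply, ih, h]
  have hle : m ≤ n * m := Nat.le_mul_of_pos_left m hn
  have h2 : n * m = (n * m - m) + m := by omega
  calc t = D.parent^[n * m] t := (key m).symm
    _ = D.parent^[(n * m - m) + m] t := by rw [← h2]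
    _ = D.parent^[n * m - m] (D.parent^[m] t) := Function.iterate_add_apply _ _ _ _
    _ = D.root := by rw [hm, iterate_root]

noncomputable def depth (t : ι) : ℕ := Nat.find (D.reaches_root t)

lemma iterate_depth (t : ι) : D.parent^[D.depth t] t = D.root := Nat.find_spec (D.reaches_root t)

lemma depth_eq_zero_iff {t : ι} : D.depth t = 0 ↔ t = D.root := by
  constructor
  · intro h; have h2 := D.iterate_depth t; rwa [h] at h2
  · intro h; subst h
    exact Nat.le_zero.mp (Nat.find_le rfl)

lemma depth_le_of_desc {a b : ι} (h : D.Desc a b) : D.depth b ≤ D.depth a := by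
  obtain ⟨n, rfl⟩ := h
  rcases Nat.le_total n (D.depth a) with hn | hn
  · have h4 : D.parent^[D.depth a - n] (D.parent^[n] a) = D.root := by
      rw [← Function.iterate_add_apply]
      have h2 : D.depth a - n + n = D.depth a := by omega
      rw [h2]; exact D.iterate_depth a
    exact le_trans (Nat.find_le h4) (by omega)
  · have h2 : D.parent^[n] a = D.root := by
      have h3 : n = (n - D.depth a) + D.depth a := by omega
      rw [h3, Function.iterate_add_apply, D.iterate_depth, iterate_root]
    rw [h2, D.depth_eq_zero_iff.mpr rfl]
    exact Nat.zero_le _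

lemma eq_of_desc_of_depth_le {a b : ι} (h : D.Desc b a) (hd : D.depth b ≤ D.depth a) :
    a = b := by
  obtain ⟨n, hn⟩ := h
  rcases Nat.le_total n (D.depth b) with hcase | hcase
  · have hda : D.depth a ≤ D.depth b - n := by
      apply Nat.find_le
      rw [← hn, ← Function.iterate_add_apply]
      have h2 : D.depth b - n + n = D.depth b := by omega
      rw [h2]; exact D.iterate_depth b
    rcases Nat.eq_zero_or_pos (D.depth b) with h0 | h0
    · have hb := D.depth_eq_zero_iff.mp h0
      have ha : a = D.root := by rw [← hn, hb, iterate_root]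
      rw [ha, hb]
    · have hn0 : n = 0 := by omega
      rw [← hn, hn0]; rfl
  · have ha : a = D.root := by
      rw [← hn]
      have h3 : n = (n - D.depth b) + D.depth b := by omega
      rw [h3, Function.iterate_add_apply, D.iterate_depth, iterate_root]
    have ha0 : D.depth a = 0 := D.depth_eq_zero_iff.mpr ha
    have hb0 : D.depth b = 0 := by omega
    rw [ha, D.depth_eq_zero_iff.mp hb0]

lemma desc_comparable {r a b : ι} (h1 : D.Desc r a) (h2 : D.Desc r b) :
    D.Desc a b ∨ D.Desc b a := by
  obtain ⟨m, rfl⟩ := h1; obtain ⟨n, rfl⟩ := h2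
  rcases Nat.le_total m n with h | h
  · left
    exact ⟨n - m, by rw [← Function.iterate_add_apply]; congr 1; omega⟩
  · right
    exact ⟨m - n, by rw [← Function.iterate_add_apply]; congr 1; omega⟩

lemma desc_of_comparable_of_le {a b : ι} (h : D.Desc a b ∨ D.Desc b a)
    (hd : D.depth b ≤ D.depth a) : D.Desc a b := by
  rcases h with h | h
  · exact h
  · rw [D.eq_of_desc_of_depth_le h hd]
    exact D.desc_refl b

lemma depth_parent {t : ι} (h : t ≠ D.root) : D.depth (D.parent t) + 1 = D.depth t := by
  have h1 : D.depth t ≠ 0 := fun h0 => h (D.depth_eq_zero_iff.mp h0)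
  have h2 : D.parent^[D.depth t - 1] (D.parent t) = D.root := by
    rw [← Function.iterate_succ_apply]
    have h3 : (D.depth t - 1).succ = D.depth t := by omega
    rw [h3]; exact D.iterate_depth t
  have le1 : D.depth (D.parent t) ≤ D.depth t - 1 := Nat.find_le h2
  have le2 : D.depth t ≤ D.depth (D.parent t) + 1 := by
    apply Nat.find_le
    rw [Function.iterate_succ_apply]
    exact D.iterate_depth (D.parent t)
  omega

lemma mem_bag_parent_of_between {v : V} {r : ι} {m : ℕ} (hm : 1 ≤ m)
    (hr : v ∈ D.bag r) (hmm : v ∈ D.bag (D.parent^[m] r)) : v ∈ D.bag (D.parent r) := by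
  by_cases hroot : r = D.root
  · subst hroot; rw [D.parent_root]; rwa [iterate_root] at hmm
  by_cases hp : v ∈ D.bag (D.parent r)
  · exact hp
  exfalso
  obtain ⟨n, hn⟩ := D.bag_conn v r hr hroot hp (D.parent^[m] r) hmm
  rw [← Function.iterate_add_apply] at hn
  exact hroot (D.eq_root_of_periodic (by omega) hn)

lemma mem_bag_of_between {v : V} {m : ℕ} :
    ∀ {r : ι}, v ∈ D.bag r → v ∈ D.bag (D.parent^[m] r) →
      ∀ j ≤ m, v ∈ D.bag (D.parent^[j] r) := by
  induction m with
  | zero =>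
      intro r hr _ j hj
      have h0 : j = 0 := by omega
      subst h0; exact hr
  | succ m ih =>
      intro r hr hm j hj
      have hpar : v ∈ D.bag (D.parent r) := D.mem_bag_parent_of_between (by omega) hr hm
      rcases Nat.eq_zero_or_pos j with h0 | h0
      · subst h0; exact hr
      · have hm' : v ∈ D.bag (D.parent^[m] (D.parent r)) := by
          rwa [← Function.iterate_succ_apply]
        have h2 := ih hpar hm' (j - 1) (by omega)
        rw [← Function.iterate_succ_apply] at h2
        have h3 : (j - 1).succ = j := by omega
        rwa [h3] at h2

lemma exists_top (v : V) : ∃ t : ι, v ∈ D.bag t ∧ ∀ s, v ∈ D.bag s → D.Desc s t := by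
  have hex : ∃ n, ∃ t, v ∈ D.bag t ∧ D.depth t = n := by
    obtain ⟨t, ht⟩ := D.bag_cover v; exact ⟨D.depth t, t, ht, rfl⟩
  obtain ⟨t, hvt, hdt⟩ := Nat.find_spec hex
  refine ⟨t, hvt, fun s hs => ?_⟩
  by_cases hroot : t = D.root
  · rw [hroot]; exact D.reaches_root s
  have hnp : v ∉ D.bag (D.parent t) := by
    intro hmem
    have hlt : D.depth (D.parent t) < Nat.find hex := by
      have h2 := D.depth_parent hroot; omega
    exact Nat.find_min hex hlt ⟨D.parent t, hmem, rfl⟩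
  exact D.bag_conn v t hvt hroot hnp s hs

end RootedTreeDecomp

lemma induce_reachable_prop {V : Type*} {G : SimpleGraph V} {C : Set V} {P : V → Prop}
    (hstep : ∀ u v : V, u ∈ C → v ∈ C → G.Adj u v → P u → P v) :
    ∀ {a b : C}, (G.induce C).Reachable a b → P a → P b := by
  intro a b h
  obtain ⟨w⟩ := h
  induction w with
  | nil => exact id
  | @cons u x' b hadj _ ih =>
      exact fun hPu => ih (hstep u.1 x'.1 u.2 x'.2 hadj hPu)

lemma bramble_hit {V : Type*} {ι : Type*} {G : SimpleGraph V} (D : RootedTreeDecomp V ι G)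
    {β : Type*} [Fintype β] [Nonempty β] (E : β → Set V)
    (hconn : ∀ (B : β) (u v : V) (hu : u ∈ E B) (hv : v ∈ E B),
        (G.induce (E B)).Reachable ⟨u, hu⟩ ⟨v, hv⟩)
    (hne : ∀ B, (E B).Nonempty)
    (htouch : ∀ B B', ∃ u v, u ∈ E B ∧ v ∈ E B' ∧ (u = v ∨ G.Adj u v)) :
    ∃ t : ι, ∀ B, ∃ v ∈ E B, v ∈ D.bag t := by
  classical
  choose top htop_mem htop_desc using D.exists_top
  have hTB : ∀ B : β, ∃ t : ι, (∃ v ∈ E B, v ∈ D.bag t) ∧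
      ∀ v ∈ E B, ∀ r, v ∈ D.bag r → D.Desc r t := by
    intro B
    have hex : ∃ n, ∃ v ∈ E B, D.depth (top v) = n := by
      obtain ⟨v, hv⟩ := hne B; exact ⟨_, v, hv, rfl⟩
    obtain ⟨v₀, hv₀, hd₀⟩ := Nat.find_spec hex
    refine ⟨top v₀, ⟨v₀, hv₀, htop_mem v₀⟩, ?_⟩
    have main : ∀ v ∈ E B, D.Desc (top v) (top v₀) := by
      intro v hv
      refine induce_reachable_prop (P := fun u : V => D.Desc (top u) (top v₀)) ?_
        (hconn B v₀ v hv₀ hv) (D.desc_refl _)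
      intro u u' hu hu' hadj hPu
      obtain ⟨r, hru, hru'⟩ := D.bag_edge hadj
      have h2 : D.Desc r (top u') := htop_desc u' r hru'
      have h3 : D.Desc r (top v₀) := D.desc_trans (htop_desc u r hru) hPu
      have hdle : D.depth (top v₀) ≤ D.depth (top u') := by
        rw [hd₀]
        exact Nat.find_min' hex ⟨u', hu', rfl⟩
      exact D.desc_of_comparable_of_le (D.desc_comparable h2 h3) hdle
    exact fun v hv r hr => D.desc_trans (htop_desc v r hr) (main v hv)
  choose tB hTB1 hTB2 using hTB
  obtain ⟨Bstar, -, hmax⟩ := Finset.exists_max_image (Finset.univ : Finset β)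
      (fun B => D.depth (tB B)) ⟨Classical.arbitrary β, Finset.mem_univ _⟩
  set tstar := tB Bstar with htstar
  have claimA : ∀ B, ∃ v ∈ E B, ∃ r, v ∈ D.bag r ∧ D.Desc r tstar := by
    intro B
    obtain ⟨u, v, hu, hv, hcase⟩ := htouch B Bstar
    rcases hcase with rfl | hadj
    · exact ⟨u, hu, top u, htop_mem u, hTB2 Bstar u hv (top u) (htop_mem u)⟩
    · obtain ⟨r, hru, hrv⟩ := D.bag_edge hadj
      exact ⟨u, hu, r, hru, hTB2 Bstar v hv r hrv⟩
  refine ⟨tstar, fun B => ?_⟩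
  by_contra hB
  push_neg at hB
  obtain ⟨v₁, hv₁, r₁, hr₁, hdesc₁⟩ := claimA B
  have hv₁star : v₁ ∉ D.bag tstar := hB v₁ hv₁
  have hne_top : top v₁ ≠ tstar := fun h => hv₁star (h ▸ htop_mem v₁)
  have hdescts : D.Desc (top v₁) tstar := by
    rcases D.desc_comparable (htop_desc v₁ r₁ hr₁) hdesc₁ with h | h
    · exact h
    · exfalso
      obtain ⟨n, hn⟩ := hdesc₁
      obtain ⟨p, hp⟩ := h
      have hmm : v₁ ∈ D.bag (D.parent^[p + n] r₁) := by
        rw [Function.iterate_add_apply, hn, hp]; exact htop_mem v₁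
      have hmem := D.mem_bag_of_between hr₁ hmm n (by omega)
      rw [hn] at hmem
      exact hv₁star hmem
  have hex_s : ∃ n, D.parent^[n] (top v₁) = tstar := hdescts
  have hn₀spec := Nat.find_spec hex_s
  have hn₀pos : 1 ≤ Nat.find hex_s := by
    rcases Nat.eq_zero_or_pos (Nat.find hex_s) with h0 | h0
    · exfalso; apply hne_top; rw [← hn₀spec, h0]; rfl
    · exact h0
  set s := D.parent^[Nat.find hex_s - 1] (top v₁) with hsdef
  have hs_ne_tstar : s ≠ tstar := Nat.find_min hex_s (by omega)
  have hparent_s : D.parent s = tstar := by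
    show D.parent (D.parent^[Nat.find hex_s - 1] (top v₁)) = tstar
    have h4 := Function.iterate_succ_apply' D.parent (Nat.find hex_s - 1) (top v₁)
    rw [← h4]
    have h3 : (Nat.find hex_s - 1).succ = Nat.find hex_s := by omega
    rw [h3]; exact hn₀spec
  have hs_ne_root : s ≠ D.root := by
    intro h
    have h2 : tstar = D.root := by rw [← hparent_s, h, D.parent_root]
    exact hs_ne_tstar (h.trans h2.symm)
  have key : ∀ v ∈ E B, D.Desc (top v) s := by
    intro v hv
    refine induce_reachable_prop (P := fun u : V => D.Desc (top u) s) ?_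
      (hconn B v₁ v hv₁ hv) ⟨Nat.find hex_s - 1, rfl⟩
    intro u u' hu hu' hadj hPu
    obtain ⟨r, hru, hru'⟩ := D.bag_edge hadj
    have h1 : D.Desc r s := D.desc_trans (htop_desc u r hru) hPu
    have h2 : D.Desc r (top u') := htop_desc u' r hru'
    rcases D.desc_comparable h2 h1 with h | h
    · exact h
    · obtain ⟨b, hb⟩ := h
      rcases Nat.eq_zero_or_pos b with h0 | h0
      · have h4 : top u' = s := by rw [← hb, h0]; rfl
        rw [h4]; exact D.desc_refl s
      · exfalso
        obtain ⟨a, ha⟩ := h1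
        have hmm : u' ∈ D.bag (D.parent^[b + a] r) := by
          rw [Function.iterate_add_apply, ha, hb]; exact htop_mem u'
        have hmem := D.mem_bag_of_between hru' hmm (a + 1) (by omega)
        rw [Function.iterate_succ_apply', ha, hparent_s] at hmem
        exact hB u' hu' hmem
  obtain ⟨v₂, hv₂, hv₂bag⟩ := hTB1 B
  have hdescB : D.Desc (tB B) s := D.desc_trans (htop_desc v₂ (tB B) hv₂bag) (key v₂ hv₂)
  have hdepth_s : D.depth s = D.depth tstar + 1 := by
    have h2 := D.depth_parent hs_ne_root
    rw [hparent_s] at h2; omega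
  have hle1 : D.depth s ≤ D.depth (tB B) := D.depth_le_of_desc hdescB
  have hle2 : D.depth (tB B) ≤ D.depth tstar := hmax B (Finset.mem_univ _)
  omega

lemma natDist_add_sub (a b : ℕ) : natDist a b = (a - b) + (b - a) := by
  rcases Nat.le_total a b with h | h
  · rw [natDist, Nat.max_eq_right h, Nat.min_eq_left h]; omega
  · rw [natDist, Nat.max_eq_left h, Nat.min_eq_right h]; omega

lemma gridApex_adj_inl_iff {k : ℕ} {p q : Fin k × Fin k} :
    (gridApex k).Adj (Sum.inl p) (Sum.inl q) ↔
      natDist p.1.val q.1.val + natDist p.2.val q.2.val = 1 := Iff.rfl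

lemma gridApex_adj_inr_inl {k : ℕ} (i : Fin 2) (p : Fin k × Fin k) :
    (gridApex k).Adj (Sum.inr i) (Sum.inl p) := trivial

def crossSet (k : ℕ) (i j : Fin k) : Set ((Fin k × Fin k) ⊕ Fin 2) :=
  {v | ∃ a b : Fin k, v = Sum.inl (a, b) ∧ (a = i ∨ b = j)}

lemma mem_crossSet_row {k : ℕ} (i j b : Fin k) : Sum.inl (i, b) ∈ crossSet k i j :=
  ⟨i, b, rfl, Or.inl rfl⟩

lemma mem_crossSet_col {k : ℕ} (i j a : Fin k) : Sum.inl (a, j) ∈ crossSet k i j :=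
  ⟨a, j, rfl, Or.inr rfl⟩

lemma cross_row_reach_aux {k : ℕ} (i j : Fin k) :
    ∀ (n : ℕ) (b b' : Fin k), b.val + n = b'.val →
      ((gridApex k).induce (crossSet k i j)).Reachable
        ⟨Sum.inl (i, b), mem_crossSet_row i j b⟩ ⟨Sum.inl (i, b'), mem_crossSet_row i j b'⟩ := by
  intro n
  induction n with
  | zero =>
      intro b b' h
      have hb : b = b' := Fin.ext (by omega)
      subst hb; exact SimpleGraph.Reachable.refl _
  | succ n ih =>
      intro b b' h
      have hlt : b.val + 1 < k := by have := b'.isLt; omega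
      have hadj : ((gridApex k).induce (crossSet k i j)).Adj
          ⟨Sum.inl (i, b), mem_crossSet_row i j b⟩
          ⟨Sum.inl (i, ⟨b.val + 1, hlt⟩), mem_crossSet_row i j ⟨b.val + 1, hlt⟩⟩ := by
        show (gridApex k).Adj (Sum.inl (i, b)) (Sum.inl (i, ⟨b.val + 1, hlt⟩))
        rw [gridApex_adj_inl_iff]
        show natDist i.val i.val + natDist b.val (b.val + 1) = 1
        rw [natDist_add_sub, natDist_add_sub]; omega
      exact hadj.reachable.trans (ih ⟨b.val + 1, hlt⟩ b' (by simp; omega))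

lemma cross_row_reach {k : ℕ} (i j : Fin k) (b b' : Fin k) :
    ((gridApex k).induce (crossSet k i j)).Reachable
      ⟨Sum.inl (i, b), mem_crossSet_row i j b⟩ ⟨Sum.inl (i, b'), mem_crossSet_row i j b'⟩ := by
  rcases Nat.le_total b.val b'.val with h | h
  · exact cross_row_reach_aux i j (b'.val - b.val) b b' (by omega)
  · exact (cross_row_reach_aux i j (b.val - b'.val) b' b (by omega)).symm

lemma cross_col_reach_aux {k : ℕ} (i j : Fin k) :
    ∀ (n : ℕ) (a a' : Fin k), a.val + n = a'.val →
      ((gridApex k).induce (crossSet k i j)).Reachable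
        ⟨Sum.inl (a, j), mem_crossSet_col i j a⟩ ⟨Sum.inl (a', j), mem_crossSet_col i j a'⟩ := by
  intro n
  induction n with
  | zero =>
      intro a a' h
      have ha : a = a' := Fin.ext (by omega)
      subst ha; exact SimpleGraph.Reachable.refl _
  | succ n ih =>
      intro a a' h
      have hlt : a.val + 1 < k := by have := a'.isLt; omega
      have hadj : ((gridApex k).induce (crossSet k i j)).Adj
          ⟨Sum.inl (a, j), mem_crossSet_col i j a⟩
          ⟨Sum.inl (⟨a.val + 1, hlt⟩, j), mem_crossSet_col i j ⟨a.val + 1, hlt⟩⟩ := by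
        show (gridApex k).Adj (Sum.inl (a, j)) (Sum.inl (⟨a.val + 1, hlt⟩, j))
        rw [gridApex_adj_inl_iff]
        show natDist a.val (a.val + 1) + natDist j.val j.val = 1
        rw [natDist_add_sub, natDist_add_sub]; omega
      exact hadj.reachable.trans (ih ⟨a.val + 1, hlt⟩ a' (by simp; omega))

lemma cross_col_reach {k : ℕ} (i j : Fin k) (a a' : Fin k) :
    ((gridApex k).induce (crossSet k i j)).Reachable
      ⟨Sum.inl (a, j), mem_crossSet_col i j a⟩ ⟨Sum.inl (a', j), mem_crossSet_col i j a'⟩ := by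
  rcases Nat.le_total a.val a'.val with h | h
  · exact cross_col_reach_aux i j (a'.val - a.val) a a' (by omega)
  · exact (cross_col_reach_aux i j (a.val - a'.val) a' a (by omega)).symm

lemma cross_conn {k : ℕ} (i j : Fin k) (u v : (Fin k × Fin k) ⊕ Fin 2)
    (hu : u ∈ crossSet k i j) (hv : v ∈ crossSet k i j) :
    ((gridApex k).induce (crossSet k i j)).Reachable ⟨u, hu⟩ ⟨v, hv⟩ := by
  have hcen : ∀ (w : (Fin k × Fin k) ⊕ Fin 2) (hw : w ∈ crossSet k i j),
      ((gridApex k).induce (crossSet k i j)).Reachable ⟨w, hw⟩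
        ⟨Sum.inl (i, j), mem_crossSet_row i j j⟩ := by
    rintro w ⟨a, b, rfl, (rfl | rfl)⟩
    · exact cross_row_reach a j b j
    · exact cross_col_reach i b a i
  exact (hcen u hu).trans (hcen v hv).symm

lemma gridApex_tw_lb {k w : ℕ} (h : TreewidthLE (gridApex k) w) : k ≤ w := by
  classical
  obtain ⟨ι, D, hbags⟩ := h
  rcases Nat.eq_zero_or_pos k with rfl | hk
  · exact Nat.zero_le w
  have : Nonempty (Fin k) := ⟨⟨0, hk⟩⟩
  set E : Option (Fin k × Fin k) → Set ((Fin k × Fin k) ⊕ Fin 2) :=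
    fun B => match B with
      | none => {Sum.inr 0}
      | some (i, j) => crossSet k i j with hE
  have hne : ∀ B, (E B).Nonempty := by
    rintro (_ | ⟨i, j⟩)
    · exact ⟨Sum.inr 0, rfl⟩
    · exact ⟨Sum.inl (i, j), mem_crossSet_row i j j⟩
  have hconn : ∀ (B : Option (Fin k × Fin k)) (u v : (Fin k × Fin k) ⊕ Fin 2)
      (hu : u ∈ E B) (hv : v ∈ E B),
      ((gridApex k).induce (E B)).Reachable ⟨u, hu⟩ ⟨v, hv⟩ := by
    rintro (_ | ⟨i, j⟩) u v hu hv
    · have h1 : u = Sum.inr 0 := hu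
      have h2 : v = Sum.inr 0 := hv
      subst h1; subst h2
      exact SimpleGraph.Reachable.refl _
    · exact cross_conn i j u v hu hv
  have htouch : ∀ B B', ∃ u v, u ∈ E B ∧ v ∈ E B' ∧
      (u = v ∨ (gridApex k).Adj u v) := by
    rintro (_ | ⟨i, j⟩) (_ | ⟨i', j'⟩)
    · exact ⟨Sum.inr 0, Sum.inr 0, rfl, rfl, Or.inl rfl⟩
    · exact ⟨Sum.inr 0, Sum.inl (i', j'), rfl, mem_crossSet_row i' j' j',
        Or.inr (gridApex_adj_inr_inl _ _)⟩
    · exact ⟨Sum.inl (i, j), Sum.inr 0, mem_crossSet_row i j j, rfl,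
        Or.inr ((gridApex_adj_inr_inl _ _).symm)⟩
    · exact ⟨Sum.inl (i, j'), Sum.inl (i, j'), ⟨i, j', rfl, Or.inl rfl⟩,
        ⟨i, j', rfl, Or.inr rfl⟩, Or.inl rfl⟩
  obtain ⟨t, ht⟩ := bramble_hit D E hconn hne htouch
  obtain ⟨hfin, hcard⟩ := hbags t
  have hxS : (Sum.inr 0 : (Fin k × Fin k) ⊕ Fin 2) ∈ D.bag t := by
    obtain ⟨v, hv, hvS⟩ := ht none
    have h1 : v = Sum.inr 0 := hv
    rwa [h1] at hvS
  have hcross : ∀ i j : Fin k, ∃ a b : Fin k,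
      Sum.inl (a, b) ∈ D.bag t ∧ (a = i ∨ b = j) := by
    intro i j
    obtain ⟨v, hv, hvS⟩ := ht (some (i, j))
    obtain ⟨a, b, rfl, hab⟩ := hv
    exact ⟨a, b, hvS, hab⟩
  have hmain : (∀ i : Fin k, ∃ b, Sum.inl (i, b) ∈ D.bag t) ∨
      (∀ j : Fin k, ∃ a, Sum.inl (a, j) ∈ D.bag t) := by
    by_contra hcon
    push_neg at hcon
    obtain ⟨⟨i, hi⟩, ⟨j, hj⟩⟩ := hcon
    obtain ⟨a, b, hab, hor⟩ := hcross i j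
    rcases hor with rfl | rfl
    · exact hi b hab
    · exact hj a hab
  have key : ∃ g : Fin k → Fin k × Fin k, Function.Injective g ∧
      ∀ i, Sum.inl (g i) ∈ D.bag t := by
    rcases hmain with h | h
    · choose f hf using h
      refine ⟨fun i => (i, f i), fun i i' hii => ?_, hf⟩
      simpa using congrArg Prod.fst hii
    · choose f hf using h
      refine ⟨fun j => (f j, j), fun j j' hjj => ?_, hf⟩
      simpa using congrArg Prod.snd hjj
  obtain ⟨g, hginj, hgS⟩ := key
  have hginj' : Function.Injective (fun i => (Sum.inl (g i) : (Fin k × Fin k) ⊕ Fin 2)) :=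
    fun i i' hii => hginj (Sum.inl_injective hii)
  have hsub : insert (Sum.inr 0 : (Fin k × Fin k) ⊕ Fin 2)
      (Set.range fun i => (Sum.inl (g i) : (Fin k × Fin k) ⊕ Fin 2)) ⊆ D.bag t := by
    rintro v hv
    rcases Set.mem_insert_iff.mp hv with rfl | ⟨i, rfl⟩
    · exact hxS
    · exact hgS i
  have hcount : (insert (Sum.inr 0 : (Fin k × Fin k) ⊕ Fin 2)
      (Set.range fun i => (Sum.inl (g i) : (Fin k × Fin k) ⊕ Fin 2))).ncard = k + 1 := by
    rw [Set.ncard_insert_of_notMem (by rintro ⟨i, hi⟩; exact Sum.inl_ne_inr hi)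
      (Set.toFinite _)]
    rw [← Set.image_univ, Set.ncard_image_of_injective _ hginj', Set.ncard_univ,
      Nat.card_eq_fintype_card, Fintype.card_fin]
  have hle : k + 1 ≤ (D.bag t).ncard := by
    rw [← hcount]
    exact Set.ncard_le_ncard hsub hfin
  omega

universe u_tw1 in
lemma treewidthLE_of_iso {V V' : Type*} {G : SimpleGraph V} {H : SimpleGraph V'}
    (e : G ≃g H) {w : ℕ} (h : TreewidthLE.{u_tw1} G w) : TreewidthLE.{u_tw1} H w := by
  obtain ⟨ι, D, hbags⟩ := h
  refine ⟨ι, ⟨D.parent, D.root, D.parent_root, D.reaches_root,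
    fun t => e.toEquiv '' D.bag t, ?_, ?_, ?_⟩, ?_⟩
  · intro v
    obtain ⟨t, ht⟩ := D.bag_cover (e.toEquiv.symm v)
    exact ⟨t, Set.mem_image_equiv.mpr ht⟩
  · intro u v huv
    have hadj : G.Adj (e.toEquiv.symm u) (e.toEquiv.symm v) :=
      e.symm.map_adj_iff.mpr huv
    obtain ⟨t, h1, h2⟩ := D.bag_edge hadj
    exact ⟨t, Set.mem_image_equiv.mpr h1, Set.mem_image_equiv.mpr h2⟩
  · intro v t hv ht hnp s hs
    exact D.bag_conn (e.toEquiv.symm v) t (Set.mem_image_equiv.mp hv) ht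
      (fun hc => hnp (Set.mem_image_equiv.mpr hc)) s (Set.mem_image_equiv.mp hs)
  · intro t
    obtain ⟨hfin, hcard⟩ := hbags t
    constructor
    · exact hfin.image _
    · rwa [Set.ncard_image_of_injective _ e.toEquiv.injective]


/-- Let `G` be the `k × k` grid plus two universal vertices `x, y`, with
bipartition classes `A, B`, and `Z₁ := A ∪ {x}`.  Then `G[Z₁ \ {x}] = G[A]` has no edges,
so `G/(Z₁ \ {x})` is isomorphic to `G`, and hence `tw(G/(Z₁ \ {x})) ≥ k`. -/
theorem gridApex_contraction_minus_vertex
    (k : ℕ) :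
    (∀ u v : (Fin k × Fin k) ⊕ Fin 2,
        u ∈ Zone k \ {Sum.inr 0} → v ∈ Zone k \ {Sum.inr 0} → ¬ (gridApex k).Adj u v) ∧
    ∀ (V' : Type) (G' : SimpleGraph V') (π : ((Fin k × Fin k) ⊕ Fin 2) → V'),
      IsComponentContraction (gridApex k) (Zone k \ {Sum.inr 0}) G' π →
        Nonempty (G' ≃g gridApex k) ∧ ∀ w : ℕ, TreewidthLE G' w → k ≤ w := by
  have part1 : ∀ u v : (Fin k × Fin k) ⊕ Fin 2,
      u ∈ Zone k \ {Sum.inr 0} → v ∈ Zone k \ {Sum.inr 0} → ¬ (gridApex k).Adj u v := by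
    intro u v hu hv hadj
    obtain ⟨p, rfl, hp⟩ : ∃ p, u = Sum.inl p ∧ (p.1.val + p.2.val) % 2 = 0 := by
      rcases hu with ⟨hu1, hu2⟩
      rcases hu1 with h | h
      · exact h
      · exact absurd h hu2
    obtain ⟨q, rfl, hq⟩ : ∃ q, v = Sum.inl q ∧ (q.1.val + q.2.val) % 2 = 0 := by
      rcases hv with ⟨hv1, hv2⟩
      rcases hv1 with h | h
      · exact h
      · exact absurd h hv2
    rw [gridApex_adj_inl_iff, natDist_add_sub, natDist_add_sub] at hadj
    omega
  refine ⟨part1, fun V' G' π hcc => ?_⟩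
  obtain ⟨hsurj, hfib, hadj⟩ := hcc
  have hinj : Function.Injective π := by
    intro u v huv
    rcases (hfib u v).mp huv with h | ⟨hu, hv, hreach⟩
    · exact h
    · obtain ⟨wlk⟩ := hreach
      cases wlk with
      | nil => rfl
      | @cons _ c _ hstep _ =>
          exact absurd hstep (part1 u c.1 hu c.2)
  have hbij : Function.Bijective π := ⟨hinj, hsurj⟩
  let e : V' ≃ ((Fin k × Fin k) ⊕ Fin 2) := (Equiv.ofBijective π hbij).symm
  have hpe : ∀ a : V', π (e a) = a := fun a => (Equiv.ofBijective π hbij).apply_symm_apply a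
  have hiso : ∀ a b : V', (gridApex k).Adj (e a) (e b) ↔ G'.Adj a b := by
    intro a b
    constructor
    · intro h
      refine (hadj a b).mpr ⟨?_, e a, e b, h, hpe a, hpe b⟩
      intro hab
      subst hab
      exact (gridApex k).irrefl h
    · intro h
      obtain ⟨hne, u, v, huv, hu, hv⟩ := (hadj a b).mp h
      have h1 : u = e a := hinj (by rw [hu, hpe])
      have h2 : v = e b := hinj (by rw [hv, hpe])
      rwa [h1, h2] at huv
  let iso : G' ≃g gridApex k := ⟨e, fun {a b} => hiso a b⟩
  exact ⟨⟨iso⟩, fun w htw => gridApex_tw_lb (treewidthLE_of_iso iso htw)⟩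
end
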